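/- Let L be a reflective subfibration on E. Given composable morphisms f : X ⟶ Y and g : Y ⟶ Z in E with f L-connected, the morphism g is L-connected if and only if g ∘ f is L-connected. -/

import Mathlib

open CategoryTheory CategoryTheory.Limits

universe v u

/-- A morphism `l` is uniquely left orthogonal to a morphism `r`. -/
def UniqueLift {C : Type*} [Category C] {A B X Y : C} (l : A ⟶ B) (r : X ⟶ Y) : Prop :=
  ∀ (u : A ⟶ X) (v : B ⟶ Y), u ≫ r = l ≫ v → ∃! d : B ⟶ X, l ≫ d = u ∧ d ≫ r = v

variable (E : Type u) [Category.{v} E] [HasPullbacks E]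

/-- A reflective subfibration on a category `E` with pullbacks: a pullback-stable
assignment of a reflective (full) subcategory `D X ⊆ Over X` for every `X : E`,
with reflector `Lf X` (the composite of the localization onto `D X` and the
inclusion) and unit `η X`, such that pullback functors preserve the subcategories
and the canonical comparison map `L_X (f* p) ⟶ f* (L_Y p)` is an isomorphism;
the latter is expressed by requiring that the pullback of a unit map is an
`L_X`-equivalence, which is equivalent to invertibility of the comparison map. -/
structure ReflectiveSubfibration where
  /-- membership in the reflective subcategory `D X ⊆ Over X` -/
  loc : ∀ {X : E}, Over X → Prop
  /-- the localization functor `L_X : Over X ⥤ Over X` -/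
  Lf : ∀ X : E, Over X ⥤ Over X
  /-- the unit of the localization -/
  η : ∀ X : E, 𝟭 (Over X) ⟶ Lf X
  loc_obj : ∀ (X : E) (p : Over X), loc ((Lf X).obj p)
  reflect : ∀ (X : E) (p d : Over X), loc d → ∀ g : p ⟶ d,
      ∃! h : (Lf X).obj p ⟶ d, (η X).app p ≫ h = g
  loc_pullback : ∀ {X Y : E} (f : X ⟶ Y) (p : Over Y),
      loc p → loc ((Over.pullback f).obj p)
  comparison_isIso : ∀ {X Y : E} (f : X ⟶ Y) (p : Over Y),
      IsIso ((Lf X).map ((Over.pullback f).map ((η Y).app p)))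

variable {E}

namespace ReflectiveSubfibration

variable (rsf : ReflectiveSubfibration E)

/-- A morphism `p : A ⟶ X` of `E` is `L`-local if it lies in `D X` as an object of `Over X`. -/
def LocalMap {A X : E} (p : A ⟶ X) : Prop := rsf.loc (Over.mk p)

/-- A morphism of `Over X` is an `L_X`-equivalence if `L_X` inverts it. -/
def Lequiv {X : E} {p q : Over X} (α : p ⟶ q) : Prop := IsIso ((rsf.Lf X).map α)

/-- A morphism `f : A ⟶ X` is `L`-connected if `L_X f` is a terminal object of `Over X`,
i.e. its structure morphism to `X` is an isomorphism. -/
def Connected {A X : E} (f : A ⟶ X) : Prop := IsIso ((rsf.Lf X).obj (Over.mk f)).hom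

/-- A morphism is `L`-separated if its diagonal is `L`-local. -/
def Separated {A X : E} (p : A ⟶ X) : Prop := rsf.LocalMap (pullback.diagonal p)

end ReflectiveSubfibration
namespace ReflectiveSubfibration

variable (rsf : ReflectiveSubfibration E)

/-- If precomposition with `α` is bijective on maps into every local object,
then `L` inverts `α`. -/
lemma isIso_map_of_unique {X : E} {p q : Over X} (α : p ⟶ q)
    (H : ∀ d : Over X, rsf.loc d → ∀ u : p ⟶ d, ∃! v : q ⟶ d, α ≫ v = u) :
    IsIso ((rsf.Lf X).map α) := by
  obtain ⟨β, hβ, -⟩ := H ((rsf.Lf X).obj p) (rsf.loc_obj X p) ((rsf.η X).app p)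
  obtain ⟨β', hβ', -⟩ := rsf.reflect X q ((rsf.Lf X).obj p) (rsf.loc_obj X p) β
  have nat : (rsf.η X).app p ≫ (rsf.Lf X).map α = α ≫ (rsf.η X).app q := by
    simpa using ((rsf.η X).naturality α).symm
  have h1 : (rsf.Lf X).map α ≫ β' = 𝟙 _ := by
    obtain ⟨h, -, huniq⟩ := rsf.reflect X p ((rsf.Lf X).obj p) (rsf.loc_obj X p)
      ((rsf.η X).app p)
    rw [huniq ((rsf.Lf X).map α ≫ β')
        (by show _ = _; rw [← Category.assoc, nat, Category.assoc, hβ', hβ]),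
      huniq (𝟙 _) (by show _ = _; rw [Category.comp_id])]
  have hβL : β ≫ (rsf.Lf X).map α = (rsf.η X).app q := by
    obtain ⟨v, -, huniq⟩ := H ((rsf.Lf X).obj q) (rsf.loc_obj X q)
      (α ≫ (rsf.η X).app q)
    rw [huniq (β ≫ (rsf.Lf X).map α) (by show _ = _; rw [← Category.assoc, hβ, nat]),
      huniq ((rsf.η X).app q) (by show _ = _; rfl)]
  have h2 : β' ≫ (rsf.Lf X).map α = 𝟙 _ := by
    obtain ⟨h, -, huniq⟩ := rsf.reflect X q ((rsf.Lf X).obj q) (rsf.loc_obj X q)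
      ((rsf.η X).app q)
    rw [huniq (β' ≫ (rsf.Lf X).map α)
        (by show _ = _; rw [← Category.assoc, hβ', hβL]),
      huniq (𝟙 _) (by show _ = _; rw [Category.comp_id])]
  exact ⟨β', h1, h2⟩

/-- If `f` is connected, precomposition with `f` is bijective on maps into locals. -/
lemma unique_comp_of_connected {X Y Z : E} (f : X ⟶ Y) (g : Y ⟶ Z)
    (hf : rsf.Connected f) (q : Over Z) (hq : rsf.loc q)
    (u : Over.mk (f ≫ g) ⟶ q) :
    ∃! v : Over.mk g ⟶ q, (Over.homMk f : Over.mk (f ≫ g) ⟶ Over.mk g) ≫ v = u := by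
  have hf' : IsIso ((rsf.Lf Y).obj (Over.mk f)).hom := hf
  set T : Over Y := (rsf.Lf Y).obj (Over.mk f) with hT
  let q' : Over Y := Over.mk (pullback.snd q.hom g)
  have hq'loc : rsf.loc q' := rsf.loc_pullback g q hq
  have hw : u.left ≫ q.hom = f ≫ g := Over.w u
  -- the transpose of u
  let ut : Over.mk f ⟶ q' := Over.homMk (pullback.lift u.left f hw) (by exact pullback.lift_snd _ _ _)
  obtain ⟨h, hh, huniq⟩ := rsf.reflect Y (Over.mk f) q' hq'loc ut
  have hηw : ((rsf.η Y).app (Over.mk f)).left ≫ T.hom = f := Over.w _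
  have hhw : h.left ≫ pullback.snd q.hom g = T.hom := Over.w h
  -- the section of q' obtained from h
  set s : Y ⟶ pullback q.hom g := inv T.hom ≫ h.left with hs
  have hss : s ≫ pullback.snd q.hom g = 𝟙 Y := by
    rw [hs, Category.assoc, hhw, IsIso.inv_hom_id]
  have hfs : f ≫ s = pullback.lift u.left f hw := by
    have h0 : f ≫ inv T.hom = ((rsf.η Y).app (Over.mk f)).left := by
      rw [IsIso.comp_inv_eq, hηw]
    rw [hs, ← Category.assoc, h0]
    have := congrArg CommaMorphism.left hh
    simpa [ut] using this
  refine ⟨Over.homMk (s ≫ pullback.fst q.hom g)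
      (by rw [Category.assoc, pullback.condition, ← Category.assoc, hss]
          simp), ?_, ?_⟩
  · ext
    simp only [Over.comp_left, Over.homMk_left]
    rw [← Category.assoc, hfs]
    exact pullback.lift_fst _ _ _
  · rintro v hv
    -- uniqueness: build the section from v and use uniqueness of h
    have hvw : v.left ≫ q.hom = g := Over.w v
    have hfv : f ≫ v.left = u.left := by
      have := congrArg CommaMorphism.left hv
      simpa using this
    set sv : Y ⟶ pullback q.hom g := pullback.lift v.left (𝟙 Y) (by simp [hvw]) with hsv
    have hhv : (Over.homMk (T.hom ≫ sv) (by simp only [q', Over.mk_hom, hsv, Category.assoc, pullback.lift_snd, Category.comp_id]) : T ⟶ q') = h := by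
      refine huniq _ ?_
      ext
      show _ ≫ (T.hom ≫ sv) = _
      rw [← Category.assoc, hηw]
      show _ = pullback.lift u.left f hw
      apply pullback.hom_ext <;> simp only [hsv, Category.assoc, pullback.lift_fst, pullback.lift_snd, hfv, Category.comp_id]
    have hsv_s : sv = s := by
      have h1 : T.hom ≫ sv = h.left := congrArg CommaMorphism.left hhv
      rw [hs, ← h1, ← Category.assoc, IsIso.inv_hom_id, Category.id_comp]
    ext
    show v.left = s ≫ pullback.fst q.hom g
    rw [← hsv_s, hsv]
    exact (pullback.lift_fst _ _ _).symm

end ReflectiveSubfibration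

/-- If `f` is `L`-connected, then `g` is `L`-connected iff `g ∘ f` is `L`-connected. -/
theorem connected_comp_iff (rsf : ReflectiveSubfibration E) {X Y Z : E}
    (f : X ⟶ Y) (g : Y ⟶ Z) (hf : rsf.Connected f) :
    rsf.Connected g ↔ rsf.Connected (f ≫ g) := by
  have hiso : IsIso ((rsf.Lf Z).map (Over.homMk f : Over.mk (f ≫ g) ⟶ Over.mk g)) :=
    rsf.isIso_map_of_unique _ (fun d hd u => rsf.unique_comp_of_connected f g hf d hd u)
  have hw : ((rsf.Lf Z).map (Over.homMk f : Over.mk (f ≫ g) ⟶ Over.mk g)).left ≫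
      ((rsf.Lf Z).obj (Over.mk g)).hom = ((rsf.Lf Z).obj (Over.mk (f ≫ g))).hom :=
    Over.w _
  haveI hleft : IsIso ((rsf.Lf Z).map (Over.homMk f : Over.mk (f ≫ g) ⟶ Over.mk g)).left :=
    inferInstanceAs (IsIso ((Over.forget Z).map _))
  constructor
  · intro hg
    haveI : IsIso ((rsf.Lf Z).obj (Over.mk g)).hom := hg
    show IsIso ((rsf.Lf Z).obj (Over.mk (f ≫ g))).hom
    rw [← hw]
    exact IsIso.comp_isIso' hleft hg
  · intro hfg
    have h0 : IsIso ((rsf.Lf Z).obj (Over.mk (f ≫ g))).hom := hfg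
    rw [← hw] at h0
    haveI := h0
    exact IsIso.of_isIso_comp_left
      ((rsf.Lf Z).map (Over.homMk f rfl : Over.mk (f ≫ g) ⟶ Over.mk g)).left
      ((rsf.Lf Z).obj (Over.mk g)).hom
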